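/- Let x₁, x₂, x₃ ∈ ℝⁿ, y₁ = x₁ ≠ 0, y₂ = (I − Q₁)x₂ ≠ 0, y₃ = (I − Q₂)(I − Q₁)x₃, where Q_i = (y_i/‖y_i‖_p) φ(y_i)ᵀ for p ∈ {1,2}. Then φ(y₁)ᵀ y₃ = 0 and φ(y₂)ᵀ y₃ = 0. -/
import Mathlib


open Finset

theorem stmt3 {n : ℕ} (p : ℕ) (hp : p = 1 ∨ p = 2) (x₁ x₂ x₃ : Fin n → ℝ) :
    let N : (Fin n → ℝ) → ℝ := fun y =>
      if p = 1 then ∑ i, |y i| else Real.sqrt (∑ i, (y i) ^ 2)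
    let φ : (Fin n → ℝ) → (Fin n → ℝ) := fun y =>
      if p = 1 then fun i => Real.sign (y i) else fun i => y i / N y
    let Q : (Fin n → ℝ) → (Fin n → ℝ) → (Fin n → ℝ) :=
      fun v y => (∑ i, φ v i * y i) • fun i => v i / N v
    let y₁ : Fin n → ℝ := x₁
    let y₂ : Fin n → ℝ := x₂ - Q y₁ x₂
    let y₃ : Fin n → ℝ := (x₃ - Q y₁ x₃) - Q y₂ (x₃ - Q y₁ x₃)
    y₁ ≠ 0 → y₂ ≠ 0 →
      (∑ i, φ y₁ i * y₃ i = 0 ∧ ∑ i, φ y₂ i * y₃ i = 0) := by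
  intro N φ Q y₁ y₂ y₃ h₁ h₂
  have key : ∀ y : Fin n → ℝ, y ≠ 0 → ∑ i, φ y i * (y i / N y) = 1 := by
    intro y hy
    obtain ⟨j, hj⟩ := Function.ne_iff.mp hy
    simp only [Pi.zero_apply] at hj
    rcases hp with h | h
    · have hN : N y = ∑ i, |y i| := by simp [N, h]
      have hNpos : 0 < N y := by
        rw [hN]
        exact Finset.sum_pos' (fun i _ => abs_nonneg _)
          ⟨j, Finset.mem_univ j, abs_pos.mpr hj⟩
      have hφ : φ y = fun i => Real.sign (y i) := by simp [φ, h]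
      rw [hφ]
      have hterm : ∀ i, Real.sign (y i) * (y i / N y) = |y i| / N y := by
        intro i
        rw [← mul_div_assoc]
        congr 1
        rcases lt_trichotomy (y i) 0 with hl | hl | hl
        · rw [Real.sign_of_neg hl, abs_of_neg hl]; ring
        · simp [hl]
        · rw [Real.sign_of_pos hl, abs_of_pos hl]; ring
      simp_rw [hterm, ← Finset.sum_div, ← hN, div_self hNpos.ne']
    · have h1 : p ≠ 1 := by omega
      have hN : N y = Real.sqrt (∑ i, (y i) ^ 2) := by simp [N, h1]
      have hs : 0 < ∑ i, (y i) ^ 2 :=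
        Finset.sum_pos' (fun i _ => sq_nonneg _)
          ⟨j, Finset.mem_univ j, by positivity⟩
      have hNpos : 0 < N y := by rw [hN]; exact Real.sqrt_pos.mpr hs
      have hφ : φ y = fun i => y i / N y := by simp [φ, h1]
      rw [hφ]
      have hsq : (N y) ^ 2 = ∑ i, (y i) ^ 2 := by rw [hN]; exact Real.sq_sqrt hs.le
      have hterm : ∀ i, y i / N y * (y i / N y) = (y i) ^ 2 / (N y) ^ 2 := by
        intro i; rw [div_mul_div_comm, ← sq, ← sq]
      simp_rw [hterm, ← Finset.sum_div, ← hsq,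
        div_self (pow_ne_zero 2 hNpos.ne')]
  have dotQ : ∀ w z v : Fin n → ℝ, ∑ i, φ v i * Q w z i
      = (∑ i, φ w i * z i) * ∑ i, φ v i * (w i / N w) := by
    intro w z v
    simp only [Q, Pi.smul_apply, smul_eq_mul]
    rw [Finset.mul_sum]
    exact Finset.sum_congr rfl fun i _ => by ring
  have dotsub : ∀ v a b : Fin n → ℝ,
      ∑ i, φ v i * (a - b) i = (∑ i, φ v i * a i) - ∑ i, φ v i * b i := by
    intro v a b
    simp [Pi.sub_apply, mul_sub, Finset.sum_sub_distrib]
  have hy2 : y₂ = x₂ - Q y₁ x₂ := rfl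
  have hz : y₃ = (x₃ - Q y₁ x₃) - Q y₂ (x₃ - Q y₁ x₃) := rfl
  set z : Fin n → ℝ := x₃ - Q y₁ x₃ with hzdef
  have h1z : ∑ i, φ y₁ i * z i = 0 := by
    rw [hzdef, dotsub, dotQ, key y₁ h₁, mul_one, sub_self]
  have h12 : ∑ i, φ y₁ i * y₂ i = 0 := by
    rw [hy2, dotsub, dotQ, key y₁ h₁, mul_one, sub_self]
  have h1y2N : ∑ i, φ y₁ i * (y₂ i / N y₂) = 0 := by
    have : ∀ i, φ y₁ i * (y₂ i / N y₂) = (φ y₁ i * y₂ i) / N y₂ := fun i =>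
      (mul_div_assoc _ _ _).symm
    simp_rw [this, ← Finset.sum_div, h12, zero_div]
  constructor
  · rw [hz, dotsub, h1z, dotQ, h1y2N, mul_zero, sub_self]
  · rw [hz, dotsub, dotQ, key y₂ h₂, mul_one, sub_self]
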